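/- Let G be a permutation group on a finite set V that acts transitively on V, and let m be an integer with 1 ≤ m < |V| and gcd(m!, |G|) = 1. Then the orbit m-collection of G is a homogeneous antisymmetric m-scheme on V: it is compatible, regular and invariant at every level 1 < s ≤ m, its level-1 partition has a single class, and for every orbit P of G on V^(s) (1 < s ≤ m) and every non-identity σ ∈ Sym_s one has P^σ ≠ P. -/

import Mathlib

def Tup (V : Type*) (s : ℕ) : Type _ :=
  {f : Fin s → V // Function.Injective f}

def proj {V : Type*} {s : ℕ} (i : Fin (s + 1)) (v : Tup V (s + 1)) : Tup V s :=
  ⟨v.1 ∘ i.succAbove, v.2.comp Fin.succAbove_right_injective⟩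

def permTup {V : Type*} {s : ℕ} (σ : Equiv.Perm (Fin s)) (v : Tup V s) : Tup V s :=
  ⟨v.1 ∘ σ, v.2.comp σ.injective⟩

abbrev Colors (V : Type*) : Type _ := (s : ℕ) → Set (Set (Tup V s))

def IsMCollection {V : Type*} (m : ℕ) (P : Colors V) : Prop :=
  ∀ s, 1 ≤ s → s ≤ m → Setoid.IsPartition (P s)

def CompatibleAt {V : Type*} (P : Colors V) (s : ℕ) : Prop :=
  ∀ C ∈ P (s + 1), ∀ u ∈ C, ∀ v ∈ C, ∀ i : Fin (s + 1),
    ∃ Q ∈ P s, proj i u ∈ Q ∧ proj i v ∈ Q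

def RegularAt {V : Type*} (P : Colors V) (s : ℕ) : Prop :=
  ∀ C ∈ P (s + 1), ∀ i : Fin (s + 1), ∀ Q ∈ P s, ∀ u ∈ Q, ∀ v ∈ Q,
    {w ∈ C | proj i w = u}.ncard = {w ∈ C | proj i w = v}.ncard

def InvariantAt {V : Type*} (P : Colors V) (s : ℕ) : Prop :=
  ∀ C ∈ P s, ∀ σ : Equiv.Perm (Fin s), permTup σ '' C ∈ P s

def AntisymmetricAt {V : Type*} (P : Colors V) (s : ℕ) : Prop :=
  ∀ C ∈ P s, ∀ σ : Equiv.Perm (Fin s), σ ≠ 1 → permTup σ '' C ≠ C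

def Homogeneous {V : Type*} (P : Colors V) : Prop :=
  ∃ C, P 1 = {C}

def IsMScheme {V : Type*} (m : ℕ) (P : Colors V) : Prop :=
  IsMCollection m P ∧
    ∀ s, 1 ≤ s → s + 1 ≤ m →
      CompatibleAt P s ∧ RegularAt P s ∧ InvariantAt P (s + 1)

def AntisymmetricColl {V : Type*} (m : ℕ) (P : Colors V) : Prop :=
  ∀ s, 2 ≤ s → s ≤ m → AntisymmetricAt P s

def IsMatching {V : Type*} (P : Colors V) (s : ℕ) (C : Set (Tup V (s + 1))) : Prop :=
  C ∈ P (s + 1) ∧ ∃ i j : Fin (s + 1), i < j ∧ proj i '' C = proj j '' C ∧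
    (proj i '' C).ncard = C.ncard

def HasMatching {V : Type*} (m : ℕ) (P : Colors V) : Prop :=
  ∃ s, 1 ≤ s ∧ s + 1 ≤ m ∧ ∃ C, IsMatching P s C

def orbitColors {V : Type*} (G : Subgroup (Equiv.Perm V)) : Colors V :=
  fun s => {C | ∃ v : Tup V s, C = {w | ∃ g ∈ G, w.1 = ⇑g ∘ v.1}}


namespace Stmt4Aux

variable {V : Type*}

def orbS (G : Subgroup (Equiv.Perm V)) {s : ℕ} (v : Tup V s) : Set (Tup V s) :=
  {w | ∃ g ∈ G, w.1 = ⇑g ∘ v.1}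

lemma mem_orbitColors {G : Subgroup (Equiv.Perm V)} {s : ℕ} {C : Set (Tup V s)} :
    C ∈ orbitColors G s ↔ ∃ v : Tup V s, C = orbS G v := Iff.rfl

lemma mem_orbS_self (G : Subgroup (Equiv.Perm V)) {s : ℕ} (v : Tup V s) : v ∈ orbS G v :=
  ⟨1, G.one_mem, by simp⟩

lemma orbS_eq {G : Subgroup (Equiv.Perm V)} {s : ℕ} {a v : Tup V s} (h : a ∈ orbS G v) :
    orbS G a = orbS G v := by
  obtain ⟨g, hg, hav⟩ := h
  ext w
  constructor
  · rintro ⟨h', hh', hw⟩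
    refine ⟨h' * g, G.mul_mem hh' hg, ?_⟩
    funext x
    simp [hw, congrFun hav x]
  · rintro ⟨h', hh', hw⟩
    refine ⟨h' * g⁻¹, G.mul_mem hh' (G.inv_mem hg), ?_⟩
    funext x
    have := congrFun hav x
    simp [hw, congrFun hav x]

def act (g : Equiv.Perm V) {s : ℕ} (v : Tup V s) : Tup V s :=
  ⟨⇑g ∘ v.1, g.injective.comp v.2⟩

lemma act_act (g h : Equiv.Perm V) {s : ℕ} (v : Tup V s) :
    act g (act h v) = act (g * h) v := rfl

lemma act_one {s : ℕ} (v : Tup V s) : act 1 v = v := Subtype.ext (by funext x; simp [act])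

lemma act_injective (g : Equiv.Perm V) {s : ℕ} : Function.Injective (act g (s := s)) := by
  intro u w h
  have := congrArg (act g⁻¹) h
  simpa [act_act, act_one] using this

lemma proj_act (g : Equiv.Perm V) {s : ℕ} (i : Fin (s + 1)) (w : Tup V (s + 1)) :
    proj i (act g w) = act g (proj i w) := rfl

end Stmt4Aux

open Stmt4Aux in
/-- If `G` is transitive, `1 ≤ m < |V|` and `gcd(m!, |G|) = 1`, then the
orbit `m`-collection is a homogeneous antisymmetric `m`-scheme. -/
theorem stmt4 {V : Type*} [Fintype V] (G : Subgroup (Equiv.Perm V)) (m : ℕ)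
    (htrans : ∀ u v : V, ∃ g ∈ G, g u = v)
    (hm1 : 1 ≤ m) (hm2 : m < Fintype.card V)
    (hgcd : Nat.gcd (Nat.factorial m) (Nat.card G) = 1) :
    IsMScheme m (orbitColors G) ∧ Homogeneous (orbitColors G) ∧
      AntisymmetricColl m (orbitColors G) := by

  -- Partition at every level
  have hpart : ∀ s : ℕ, Setoid.IsPartition (orbitColors G s) := by
    intro s
    constructor
    · rintro ⟨v, hv⟩
      have : v ∈ (∅ : Set (Tup V s)) := by rw [hv]; exact mem_orbS_self G v
      exact this
    · intro a
      refine ⟨orbS G a, ⟨⟨a, rfl⟩, mem_orbS_self G a⟩, ?_⟩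
      rintro b ⟨⟨v, rfl⟩, hab⟩
      exact (orbS_eq hab).symm
  -- Compatibility
  have hcompat : ∀ s : ℕ, ∀ C ∈ orbitColors G (s + 1), ∀ u ∈ C, ∀ v ∈ C, ∀ i : Fin (s + 1),
      ∃ Q ∈ orbitColors G s, proj i u ∈ Q ∧ proj i v ∈ Q := by
    rintro s C ⟨c0, rfl⟩ u hu v hv i
    refine ⟨orbS G (proj i c0), ⟨proj i c0, rfl⟩, ?_, ?_⟩
    · obtain ⟨g, hg, h⟩ := hu
      exact ⟨g, hg, by rw [show (proj i u).1 = u.1 ∘ i.succAbove from rfl, h]; rfl⟩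
    · obtain ⟨g, hg, h⟩ := hv
      exact ⟨g, hg, by rw [show (proj i v).1 = v.1 ∘ i.succAbove from rfl, h]; rfl⟩
  -- Invariance
  have hinv : ∀ s : ℕ, ∀ C ∈ orbitColors G s, ∀ σ : Equiv.Perm (Fin s),
      permTup σ '' C ∈ orbitColors G s := by
    rintro s C ⟨v0, rfl⟩ σ
    refine ⟨permTup σ v0, ?_⟩
    ext w
    constructor
    · rintro ⟨u, ⟨g, hg, hu⟩, rfl⟩
      exact ⟨g, hg, by rw [show (permTup σ u).1 = u.1 ∘ ⇑σ from rfl, hu]; rfl⟩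
    · rintro ⟨g, hg, hw⟩
      refine ⟨act g v0, ⟨g, hg, rfl⟩, ?_⟩
      apply Subtype.ext
      rw [hw]; rfl
  -- Regularity
  have hreg : ∀ s : ℕ, ∀ C ∈ orbitColors G (s + 1), ∀ i : Fin (s + 1),
      ∀ Q ∈ orbitColors G s, ∀ u ∈ Q, ∀ v ∈ Q,
      {w ∈ C | proj i w = u}.ncard = {w ∈ C | proj i w = v}.ncard := by
    rintro s C ⟨c0, rfl⟩ i Q ⟨q0, rfl⟩ u hu v hv
    obtain ⟨g1, hg1, hu1⟩ := hu
    obtain ⟨g2, hg2, hv1⟩ := hv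
    set g : Equiv.Perm V := g2 * g1⁻¹ with hgdef
    have hguv : act g u = v := by
      apply Subtype.ext
      funext x
      simp [act, hgdef, congrFun hu1 x, congrFun hv1 x]
    have himg : act g '' {w ∈ orbS G c0 | proj i w = u} = {w ∈ orbS G c0 | proj i w = v} := by
      ext w'
      constructor
      · rintro ⟨w, ⟨⟨h, hh, hwc⟩, hwp⟩, rfl⟩
        refine ⟨⟨g * h, G.mul_mem (G.mul_mem hg2 (G.inv_mem hg1)) hh, ?_⟩, ?_⟩
        · funext x; simp [act, congrFun hwc x]
        · rw [proj_act, hwp, hguv]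
      · rintro ⟨⟨h, hh, hwc⟩, hwp⟩
        refine ⟨act g⁻¹ w', ⟨⟨g⁻¹ * h, G.mul_mem (G.inv_mem (G.mul_mem hg2 (G.inv_mem hg1))) hh, ?_⟩, ?_⟩, ?_⟩
        · funext x; simp [act, congrFun hwc x]
        · rw [proj_act, hwp, ← hguv, act_act, inv_mul_cancel, act_one]
        · rw [act_act, mul_inv_cancel, act_one]
    show {w ∈ orbS G c0 | proj i w = u}.ncard = {w ∈ orbS G c0 | proj i w = v}.ncard
    rw [← himg, Set.ncard_image_of_injective _ (act_injective g)]
  -- Homogeneous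
  have hV : Nonempty V := Fintype.card_pos_iff.mp (by omega)
  obtain ⟨v⟩ := hV
  have hfull : ∀ v0 : Tup V 1, orbS G v0 = Set.univ := by
    intro v0
    ext w
    simp only [Set.mem_univ, iff_true]
    obtain ⟨g, hg, hgv⟩ := htrans (v0.1 0) (w.1 0)
    refine ⟨g, hg, ?_⟩
    funext x
    have hx : x = 0 := Subsingleton.elim x 0
    rw [hx]; exact hgv.symm
  have hhom : orbitColors G 1 = {(Set.univ : Set (Tup V 1))} := by
    ext A
    constructor
    · rintro ⟨v0, rfl⟩; exact hfull v0
    · rintro rfl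
      exact ⟨⟨fun _ => v, fun a b _ => Subsingleton.elim a b⟩, (hfull _).symm⟩
  -- Antisymmetry
  have hantisym : ∀ s : ℕ, 2 ≤ s → s ≤ m → ∀ C ∈ orbitColors G s,
      ∀ σ : Equiv.Perm (Fin s), σ ≠ 1 → permTup σ '' C ≠ C := by
    rintro s hs2 hsm C ⟨v0, rfl⟩ σ hσ hcon
    have hmem : permTup σ v0 ∈ orbS G v0 := by
      show permTup σ v0 ∈ {w : Tup V s | ∃ g ∈ G, w.1 = ⇑g ∘ v0.1}
      rw [← hcon]
      exact ⟨v0, mem_orbS_self G v0, rfl⟩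
    obtain ⟨g, hg, hgσ⟩ := hmem
    -- hgσ : v0.1 ∘ ⇑σ = ⇑g ∘ v0.1
    have hpow : ∀ k : ℕ, v0.1 ∘ ⇑(σ ^ k) = ⇑(g ^ k) ∘ v0.1 := by
      intro k
      induction k with
      | zero => simp
      | succ k ih =>
        rw [pow_succ, pow_succ]
        funext x
        have h1 := congrFun ih (σ x)
        have h2 : v0.1 (σ x) = g (v0.1 x) := congrFun hgσ x
        simp only [Function.comp_apply] at h1
        simp only [Function.comp_apply, Equiv.Perm.mul_apply]
        rw [← h2]
        exact h1
    set ghat : G := ⟨g, hg⟩ with hghat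
    set n := orderOf ghat with hn
    have hgn : g ^ n = 1 := by
      have := pow_orderOf_eq_one ghat
      have := congrArg (Subtype.val) this
      rw [SubmonoidClass.coe_pow, OneMemClass.coe_one] at this
      exact this
    have hσn : σ ^ n = 1 := by
      have h := hpow n
      rw [hgn] at h
      apply Equiv.ext
      intro x
      have := congrFun h x
      simp only [Function.comp_apply, Equiv.Perm.coe_one, id_eq] at this
      simpa using v0.2 this
    have hd1 : orderOf σ ∣ Nat.card G := (orderOf_dvd_of_pow_eq_one hσn).trans
      (orderOf_dvd_natCard ghat)
    have hd2 : orderOf σ ∣ Nat.factorial m := by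
      refine dvd_trans ?_ (Nat.factorial_dvd_factorial hsm)
      have := orderOf_dvd_card (x := σ)
      simpa [Fintype.card_perm] using this
    have : orderOf σ ∣ 1 := hgcd ▸ Nat.dvd_gcd hd2 hd1
    have : σ = 1 := orderOf_eq_one_iff.mp (Nat.dvd_one.mp this)
    exact hσ this
  refine ⟨⟨fun s _ _ => hpart s,
      fun s _ _ => ⟨hcompat s, hreg s, hinv (s + 1)⟩⟩,
    ⟨Set.univ, hhom⟩,
    fun s hs2 hsm => hantisym s hs2 hsm⟩
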